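/- Let k ≥ 5 be an integer and let w be a cubefree binary word of length k + 4 having 00 as a prefix and 11 as a suffix. Then θ(w) ends in 010, and the word u obtained from θ(w) by removing the suffix 010 has 01011 as a prefix, has 11 as a suffix, and does not contain 10101 as a factor. -/
import Mathlib


/-- The Thue–Morse morphism θ (0 ↦ 01, 1 ↦ 10), with 0 = `false`, 1 = `true`,
applied letterwise to a word. -/
def tmMap (w : List Bool) : List Bool :=
  w.flatMap (fun b => if b then [true, false] else [false, true])

/-- A word is cubefree if it contains no non-empty factor of the form `x ++ x ++ x`. -/
def Cubefree (w : List Bool) : Prop :=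
  ∀ x : List Bool, x ≠ [] → ¬ (x ++ x ++ x) <:+: w

/-- `w` is a factor of the Thue–Morse word `t = θ^ω(0)`: since the words `θ^m(0)`
are prefixes of `t` whose lengths tend to infinity, this holds iff `w` is an
infix of `θ^m(0)` for some `m`. -/
def FactorTM (w : List Bool) : Prop :=
  ∃ m : ℕ, w <:+: tmMap^[m] [false]

/-- The binary morphism determined by `h : Bool → List Bool` is cubefree. -/
def CubefreeMorphism (h : Bool → List Bool) : Prop :=
  ∀ w : List Bool, Cubefree w → Cubefree (w.flatMap h)

lemma tmMap_cons (b : Bool) (w : List Bool) :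
    tmMap (b :: w) = (if b then [true, false] else [false, true]) ++ tmMap w := by
  simp [tmMap]

lemma tmMap_append (v w : List Bool) : tmMap (v ++ w) = tmMap v ++ tmMap w := by
  simp [tmMap]

lemma tmMap_length (w : List Bool) : (tmMap w).length = 2 * w.length := by
  induction w with
  | nil => simp [tmMap]
  | cons b w ih =>
    rw [tmMap_cons]
    cases b <;> simp [ih] <;> ring

lemma aux_tt (w : List Bool) (h : [true, false, true] <+: tmMap w) :
    ∃ v, w = true :: true :: v := by
  match w with
  | [] => simp [tmMap] at h
  | false :: w' => rw [tmMap_cons] at h; simp at h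
  | true :: [] => rw [tmMap_cons] at h; simp [tmMap] at h
  | true :: false :: w'' =>
    rw [tmMap_cons, tmMap_cons] at h; simp at h
  | true :: true :: w'' => exact ⟨w'', rfl⟩

lemma aux_ff (w : List Bool) (h : [false, true, false, true] <+: tmMap w) :
    ∃ v, w = false :: false :: v := by
  match w with
  | [] => simp [tmMap] at h
  | true :: w' => rw [tmMap_cons] at h; simp at h
  | false :: [] => rw [tmMap_cons] at h; simp [tmMap] at h
  | false :: true :: w'' =>
    rw [tmMap_cons, tmMap_cons] at h; simp at h
  | false :: false :: w'' => exact ⟨w'', rfl⟩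

lemma no_pattern (w : List Bool)
    (h : [true, false, true, false, true] <:+: tmMap w) :
    [false, false, false] <:+: w ∨ [true, true, true] <:+: w := by
  induction w with
  | nil => simp [tmMap] at h
  | cons b w' ih =>
    rw [tmMap_cons] at h
    cases b with
    | true =>
      rw [show ((if true then [true,false] else [false,true]) ++ tmMap w' : List Bool)
        = true :: false :: tmMap w' from rfl] at h
      rw [List.infix_cons_iff] at h
      rcases h with h | h
      · -- [1,0,1,0,1] <+: true :: false :: tmMap w'
        simp only [List.cons_prefix_cons] at h
        obtain ⟨-, -, h⟩ := h
        obtain ⟨v, hv⟩ := aux_tt w' h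
        right
        exact (show ([true,true,true] : List Bool) <+: true :: w' by
          rw [hv]; simp).isInfix
      rw [List.infix_cons_iff] at h
      rcases h with h | h
      · simp [List.cons_prefix_cons] at h
      · rcases ih h with h' | h'
        · exact Or.inl (List.infix_cons h')
        · exact Or.inr (List.infix_cons h')
    | false =>
      rw [show ((if false then [true,false] else [false,true]) ++ tmMap w' : List Bool)
        = false :: true :: tmMap w' from rfl] at h
      rw [List.infix_cons_iff] at h
      rcases h with h | h
      · simp [List.cons_prefix_cons] at h
      rw [List.infix_cons_iff] at h
      rcases h with h | h
      · simp only [List.cons_prefix_cons] at h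
        obtain ⟨-, h⟩ := h
        obtain ⟨v, hv⟩ := aux_ff w' h
        left
        exact (show ([false,false,false] : List Bool) <+: false :: w' by
          rw [hv]; simp).isInfix
      · rcases ih h with h' | h'
        · exact Or.inl (List.infix_cons h')
        · exact Or.inr (List.infix_cons h')

theorem stmt14 (k : ℕ) (hk : 5 ≤ k) (w : List Bool)
    (hcf : Cubefree w) (hl : w.length = k + 4)
    (hp : [false, false] <+: w) (hs : [true, true] <:+ w) :
    ∃ u : List Bool,
      tmMap w = u ++ [false, true, false] ∧
      [false, true, false, true, true] <+: u ∧
      [true, true] <:+ u ∧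
      ¬ [true, false, true, false, true] <:+: u := by
  -- no 000 and no 111 in w
  have h000 : ¬ ([false, false, false] : List Bool) <:+: w := by
    have := hcf [false] (by simp); simpa using this
  have h111 : ¬ ([true, true, true] : List Bool) <:+: w := by
    have := hcf [true] (by simp); simpa using this
  -- prefix decomposition: w = false :: false :: true :: r'
  obtain ⟨r, hr⟩ := hp
  have hrl : r.length = k + 2 := by
    have := congrArg List.length hr
    simp [hl] at this; omega
  obtain ⟨c, r', rfl⟩ : ∃ c r', r = c :: r' := by
    cases r with
    | nil => simp at hrl
    | cons c r' => exact ⟨c, r', rfl⟩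
  have hc : c = true := by
    by_contra hcne
    have : c = false := by cases c <;> simp_all
    subst this
    exact h000 (List.IsPrefix.isInfix ⟨r', by rw [← hr]; rfl⟩)
  subst hc
  -- suffix decomposition: w = s' ++ [false, true, true]
  obtain ⟨s, hsw⟩ := hs
  have hsl : s.length = k + 2 := by
    have := congrArg List.length hsw
    simp [hl] at this; omega
  obtain ⟨s', a, rfl⟩ : ∃ s' a, s = s' ++ [a] := by
    rcases List.eq_nil_or_concat s with h | ⟨s', a, h⟩
    · subst h; simp at hsl
    · exact ⟨s', a, by simpa using h⟩
  have ha : a = false := by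
    by_contra hane
    have : a = true := by cases a <;> simp_all
    subst this
    exact h111 (List.IsSuffix.isInfix ⟨s', by rw [← hsw]; simp⟩)
  subst ha
  have hw2 : w = s' ++ [false, true, true] := by rw [← hsw]; simp
  refine ⟨tmMap s' ++ [false, true, true], ?_, ?_, ?_, ?_⟩
  · rw [hw2, tmMap_append]
    simp [tmMap]
  · -- prefix
    have hpref : ([false, true, false, true, true] : List Bool) <+: tmMap w := by
      rw [← hr]
      simp [tmMap, List.cons_prefix_cons]
    have hupre : (tmMap s' ++ [false, true, true] : List Bool) <+: tmMap w := by
      refine ⟨[false, true, false], ?_⟩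
      rw [hw2, tmMap_append]; simp [tmMap]
    refine List.prefix_of_prefix_length_le hpref hupre ?_
    have := tmMap_length s'
    have : s'.length = k + 1 := by
      have := congrArg List.length hw2
      simp [hl] at this; omega
    simp [tmMap_length, this]
  · exact ⟨tmMap s' ++ [false], by simp⟩
  · intro hinf
    have hupre : (tmMap s' ++ [false, true, true] : List Bool) <+: tmMap w := by
      refine ⟨[false, true, false], ?_⟩
      rw [hw2, tmMap_append]; simp [tmMap]
    have : ([true, false, true, false, true] : List Bool) <:+: tmMap w :=
      hinf.trans hupre.isInfix
    rcases no_pattern w this with h | h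
    · exact h000 h
    · exact h111 h
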